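/- Let d ≥ 2. For each i ∈ [1,n] define the formal power series g_i = Σ_{(T,λ)} w(T,λ) · Π_{v a leaf of T} x_{λ(v)} in R[[x_1,…,x_n]], where the sum runs over all d-regular rooted plane trees T together with labelings λ : V(T) → [1,n] whose root is labeled i. Then g = (g_1,…,g_n) is the formal inverse of f, i.e., f_i(g_1(x),…,g_n(x)) = x_i as formal power series for every i ∈ [1,n]. -/

import Mathlib

open MvPolynomial

/-- A rooted plane tree with vertices labeled by `[1,n]`: a root label together with a
(linearly ordered) finite list of labeled subtrees. -/
inductive LTree (n : ℕ) : Type where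
  | node : Fin n → List (LTree n) → LTree n

namespace LTree

/-- The label of the root. -/
def label {n : ℕ} : LTree n → Fin n
  | node i _ => i

/-- The (ordered) list of subtrees rooted at the children of the root. -/
def children {n : ℕ} : LTree n → List (LTree n)
  | node _ cs => cs

/-- The weight `w(T,λ) = ∏_{e} w(e,λ)`, the product over all edges `e` of `T`, from a
parent labeled `i` to a child labeled `j`, of the indeterminate `a_{i,j}`. -/
noncomputable def weight {n : ℕ} : LTree n → MvPolynomial (Fin n × Fin n) ℚ
  | node i cs => (cs.attach.map fun c => X (i, c.1.label) * weight c.1).prod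
decreasing_by simp only [LTree.node.sizeOf_spec]; have := List.sizeOf_lt_of_mem c.2; omega

/-- The multidegree given by the labels of the leaves of `T` (a tree with no children is
a single leaf). -/
noncomputable def leafDeg {n : ℕ} : LTree n → (Fin n →₀ ℕ)
  | node i [] => Finsupp.single i 1
  | node _ (c :: cs) => ((c :: cs).attach.map fun x => leafDeg x.1).sum
decreasing_by simp only [LTree.node.sizeOf_spec]; have := List.sizeOf_lt_of_mem x.2; omega

/-- A tree is `d`-regular if every vertex has exactly `d` children or none. -/
def IsReg {n : ℕ} (d : ℕ) : LTree n → Prop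
  | node _ cs => (cs.length = d ∨ cs.length = 0) ∧ ∀ c ∈ cs.attach, IsReg d c.1
decreasing_by simp only [LTree.node.sizeOf_spec]; have := List.sizeOf_lt_of_mem c.2; omega

/-- The subtree of `T` at the position given by a list of child indices (root = `[]`),
or `none` if no such vertex exists. -/
def subtreeAt? {n : ℕ} : LTree n → List ℕ → Option (LTree n)
  | t, [] => some t
  | t, k :: q => match t.children[k]? with
    | some c => subtreeAt? c q
    | none => none

/-- The label of the vertex of `T` at a given position, if it exists. -/
def labelAt? {n : ℕ} (t : LTree n) (q : List ℕ) : Option (Fin n) :=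
  (t.subtreeAt? q).map label

end LTree

namespace LTree
variable {n : ℕ}

lemma weight_node (i : Fin n) (cs : List (LTree n)) :
    weight (node i cs) = (cs.map fun c => X (i, c.label) * weight c).prod := by
  rw [weight]
  congr 1
  exact List.attach_map_val (l := cs) (f := fun c => X (i, c.label) * weight c)

lemma leafDeg_node_of_ne_nil (i : Fin n) (cs : List (LTree n)) (h : cs ≠ []) :
    leafDeg (node i cs) = (cs.map leafDeg).sum := by
  cases cs with
  | nil => exact absurd rfl h
  | cons c cs =>
    rw [leafDeg]
    congr 1
    exact List.attach_map_val (f := leafDeg)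

lemma leafDeg_leaf (i : Fin n) : leafDeg (node i []) = Finsupp.single i 1 := by
  rw [leafDeg]

lemma isReg_node_iff {d : ℕ} {i : Fin n} {cs : List (LTree n)} :
    IsReg d (node i cs) ↔ (cs.length = d ∨ cs.length = 0) ∧ ∀ c ∈ cs, IsReg d c := by
  rw [IsReg]
  simp [List.mem_attach, Subtype.forall]

lemma isReg_leaf (d : ℕ) (i : Fin n) : IsReg d (node i []) := by
  rw [isReg_node_iff]; simp

lemma weight_leaf (i : Fin n) : weight (node i []) = 1 := by
  rw [weight_node]; simp



/-- total degree homomorphism -/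
def degH (n : ℕ) : (Fin n →₀ ℕ) →+ ℕ where
  toFun := fun α => ∑ j, α j
  map_zero' := by simp
  map_add' := fun a b => by simp [Finset.sum_add_distrib]

lemma degH_single (i : Fin n) : degH n (Finsupp.single i 1) = 1 := by
  simp [degH, Finsupp.single_apply]

lemma one_le_degH_leafDeg : ∀ T : LTree n, 1 ≤ degH n T.leafDeg
  | node i [] => by rw [leafDeg_leaf, degH_single]
  | node i (c :: cs) => by
    rw [leafDeg_node_of_ne_nil i _ (by simp), List.map_cons, List.sum_cons, map_add]
    have := one_le_degH_leafDeg c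
    omega
decreasing_by simp only [LTree.node.sizeOf_spec]; simp; omega

lemma leafDeg_node_ofFn {d : ℕ} (hd : d ≠ 0) (i : Fin n) (f : Fin d → LTree n) :
    leafDeg (node i (List.ofFn f)) = ∑ k, leafDeg (f k) := by
  rw [leafDeg_node_of_ne_nil i _ (by simp [← List.length_pos_iff, hd, Nat.pos_of_ne_zero]),
    List.map_ofFn, List.sum_ofFn]
  simp [Function.comp]

lemma weight_node_ofFn {d : ℕ} (i : Fin n) (f : Fin d → LTree n) :
    weight (node i (List.ofFn f)) = ∏ k, (X (i, (f k).label) * weight (f k)) := by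
  rw [weight_node, List.map_ofFn, List.prod_ofFn]
  rfl

lemma node_ofFn_eq {d : ℕ} {cs : List (LTree n)} (h : cs.length = d) :
    cs = List.ofFn (fun k : Fin d => cs.get (Fin.cast h.symm k)) := by
  apply List.ext_get (by simp [h])
  intro j h1 h2
  rw [List.get_ofFn]
  congr 1

lemma finite_reg_deg_le (d : ℕ) (hd : 2 ≤ d) :
    ∀ N : ℕ, {T : LTree n | T.IsReg d ∧ degH n T.leafDeg ≤ N}.Finite := by
  intro N
  induction N with
  | zero =>
    convert Set.finite_empty
    ext T
    have := one_le_degH_leafDeg T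
    simp only [Set.mem_setOf_eq, Set.mem_empty_iff_false, iff_false]
    omega
  | succ N ih =>
    apply Set.Finite.subset
      (Set.Finite.union (Set.finite_range fun i : Fin n => node i [])
        (Set.Finite.biUnion (Set.finite_univ (α := Fin n)) fun i _ =>
          Set.Finite.image (fun f : Fin d → LTree n => node i (List.ofFn f))
            (Set.Finite.pi fun _ : Fin d =>
              ih)))
    rintro T ⟨hreg, hdeg⟩
    obtain ⟨i, cs⟩ := T
    cases cs with
    | nil => exact Or.inl ⟨i, rfl⟩
    | cons c cs' =>
      rw [isReg_node_iff] at hreg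
      have hlen : (c :: cs').length = d := by
        rcases hreg.1 with h | h
        · exact h
        · simp at h
      refine Or.inr (Set.mem_biUnion (Set.mem_univ i) ?_)
      set f : Fin d → LTree n := fun k => (c :: cs').get (Fin.cast hlen.symm k) with hf
      have hcs : (c :: cs') = List.ofFn f := node_ofFn_eq hlen
      refine ⟨f, ?_, by simp only []; rw [← hcs]⟩
      intro k _
      have hmem : f k ∈ (c :: cs') := List.get_mem _ _
      refine ⟨hreg.2 _ hmem, ?_⟩
      -- degree bound
      have hsum : degH n (node i (c :: cs')).leafDeg = ∑ k', degH n ((f k').leafDeg) := by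
        rw [hcs, leafDeg_node_ofFn (by omega) i f, map_sum]
      have h1 : ∀ k', 1 ≤ degH n ((f k').leafDeg) := fun k' => one_le_degH_leafDeg _
      have hsplit : degH n ((f k).leafDeg) + ∑ k' ∈ Finset.univ.erase k, degH n ((f k').leafDeg)
          = ∑ k', degH n ((f k').leafDeg) :=
        Finset.add_sum_erase _ (fun k' => degH n ((f k').leafDeg)) (Finset.mem_univ k)
      have hne : (Finset.univ.erase k).Nonempty := by
        rw [← Finset.card_pos, Finset.card_erase_of_mem (Finset.mem_univ k), Finset.card_univ,
          Fintype.card_fin]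
        omega
      obtain ⟨k', hk'⟩ := hne
      have : 1 ≤ ∑ k' ∈ Finset.univ.erase k, degH n ((f k').leafDeg) :=
        le_trans (h1 k') (Finset.single_le_sum (f := fun k' => degH n ((f k').leafDeg)) (fun _ _ => Nat.zero_le _) hk')
      omega

open Finset in
lemma key {n : ℕ} (d : ℕ) (hd : 2 ≤ d) (i : Fin n) (α : Fin n →₀ ℕ) :
    ∑ᶠ T ∈ {T : LTree n | T.IsReg d ∧ T.label = i ∧ T.leafDeg = α}, T.weight
    = (if α = Finsupp.single i 1 then 1 else 0)
      + ∑ l ∈ Finset.finsuppAntidiag (Finset.univ : Finset (Fin d)) α,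
          ∏ k : Fin d, ∑ j : Fin n, (X (i, j) : MvPolynomial (Fin n × Fin n) ℚ) *
            ∑ᶠ T ∈ {T : LTree n | T.IsReg d ∧ T.label = j ∧ T.leafDeg = l k}, T.weight := by
  classical
  have hfin' : ∀ β : Fin n →₀ ℕ, {T : LTree n | T.IsReg d ∧ T.leafDeg = β}.Finite := fun β =>
    (finite_reg_deg_le d hd (degH n β)).subset (by rintro T ⟨h1, h2⟩; exact ⟨h1, by rw [h2]⟩)
  have hfin : ∀ (j : Fin n) (β), {T : LTree n | T.IsReg d ∧ T.label = j ∧ T.leafDeg = β}.Finite :=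
    fun j β => (hfin' β).subset (by rintro T ⟨h1, _, h3⟩; exact ⟨h1, h3⟩)
  have hrw : ∀ (j : Fin n) (β),
      (∑ᶠ T ∈ {T : LTree n | T.IsReg d ∧ T.label = j ∧ T.leafDeg = β}, T.weight)
      = ∑ T ∈ (hfin j β).toFinset, T.weight := fun j β => by
    exact finsum_mem_eq_finite_toFinset_sum _ (hfin j β)
  simp only [hrw]
  -- inner sum identity
  have hinner : ∀ β : Fin n →₀ ℕ,
      (∑ j : Fin n, (X (i, j) : MvPolynomial (Fin n × Fin n) ℚ) *
        ∑ T ∈ (hfin j β).toFinset, T.weight)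
      = ∑ T ∈ (hfin' β).toFinset, X (i, T.label) * T.weight := by
    intro β
    rw [← Finset.sum_fiberwise_of_maps_to (g := label) (t := Finset.univ)
      (fun T _ => mem_univ _) (fun T => X (i, T.label) * T.weight)]
    apply Finset.sum_congr rfl
    intro j _
    have hfilter : (hfin' β).toFinset.filter (fun T => T.label = j) = (hfin j β).toFinset := by
      ext T
      simp only [Finset.mem_filter, Set.Finite.mem_toFinset, Set.mem_setOf_eq]
      tauto
    rw [hfilter, Finset.mul_sum]
    apply Finset.sum_congr rfl
    intro T hT
    rw [Set.Finite.mem_toFinset] at hT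
    rw [hT.2.1]
  simp only [hinner]
  -- split into leaf and non-leaf trees
  rw [← Finset.sum_filter_add_sum_filter_not (hfin i α).toFinset (fun T => T.children = [])]
  congr 1
  · -- leaf part
    have hleaf : (hfin i α).toFinset.filter (fun T => T.children = []) =
        if α = Finsupp.single i 1 then {node i []} else ∅ := by
      ext T
      obtain ⟨j, cs⟩ := T
      constructor
      · rintro hT
        simp only [Finset.mem_filter, Set.Finite.mem_toFinset, Set.mem_setOf_eq] at hT
        obtain ⟨⟨hreg, hlab, hdeg⟩, hnil⟩ := hT
        have hcs : cs = [] := hnil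
        subst hcs
        have hj : j = i := hlab
        subst hj
        rw [leafDeg_leaf] at hdeg
        rw [if_pos hdeg.symm]
        exact Finset.mem_singleton_self _
      · intro hT
        by_cases hα : α = Finsupp.single i 1
        · rw [if_pos hα, Finset.mem_singleton] at hT
          rw [hT]
          simp only [Finset.mem_filter, Set.Finite.mem_toFinset, Set.mem_setOf_eq]
          exact ⟨⟨isReg_leaf d i, rfl, by rw [leafDeg_leaf, hα]⟩, rfl⟩
        · rw [if_neg hα] at hT
          exact absurd hT (Finset.notMem_empty _)
    rw [hleaf]
    split_ifs
    · rw [Finset.sum_singleton, weight_leaf]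
    · simp
  · -- node part
    set E : (Fin d → LTree n) → LTree n := fun f => node i (List.ofFn f) with hE
    have hEinj : Function.Injective E := by
      intro f g h
      simp only [hE, node.injEq, true_and] at h
      exact List.ofFn_injective h
    have hΦ : {f : Fin d → LTree n | (∀ k, IsReg d (f k)) ∧ ∑ k, leafDeg (f k) = α}.Finite := by
      apply Set.Finite.subset
        ((Set.Finite.pi fun _ : Fin d => finite_reg_deg_le d hd (degH n α)))
      rintro f ⟨h1, h2⟩ k _
      refine ⟨h1 k, ?_⟩
      rw [← h2, map_sum]
      exact Finset.single_le_sum (f := fun k => degH n (leafDeg (f k)))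
        (fun _ _ => Nat.zero_le _) (mem_univ k)
    have hfilterNode : (hfin i α).toFinset.filter (fun T => ¬ T.children = []) =
        hΦ.toFinset.image E := by
      ext T
      simp only [Finset.mem_filter, Set.Finite.mem_toFinset, Finset.mem_image,
        Set.mem_setOf_eq]
      constructor
      · rintro ⟨⟨hreg, hlab, hdeg⟩, hne⟩
        obtain ⟨j, cs⟩ := T
        have hj : j = i := hlab
        subst hj
        have hcs : cs ≠ [] := hne
        rw [isReg_node_iff] at hreg
        have hlen : cs.length = d := by
          rcases hreg.1 with h | h
          · exact h
          · rw [List.length_eq_zero_iff] at h; exact absurd h hcs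
        set f : Fin d → LTree n := fun k => cs.get (Fin.cast hlen.symm k) with hf
        have hcsf : cs = List.ofFn f := node_ofFn_eq hlen
        refine ⟨f, ⟨fun k => hreg.2 _ (List.get_mem _ _), ?_⟩, ?_⟩
        · rw [← leafDeg_node_ofFn (by omega) _ f, ← hcsf]
          exact hdeg
        · simp only [hE]
          rw [← hcsf]
      · rintro ⟨f, ⟨hf1, hf2⟩, rfl⟩
        refine ⟨⟨?_, rfl, ?_⟩, ?_⟩
        · rw [isReg_node_iff]
          refine ⟨Or.inl (List.length_ofFn (f := f)), fun c hc => ?_⟩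
          obtain ⟨k, rfl⟩ := List.mem_ofFn.1 hc
          exact hf1 k
        · rw [leafDeg_node_ofFn (by omega) i f, hf2]
        · simp only [hE, children]
          intro h
          have := congrArg List.length h
          simp at this
          omega
    rw [hfilterNode, Finset.sum_image (fun f _ g _ h => hEinj h)]
    have hwE : ∀ f : Fin d → LTree n, (E f).weight
        = ∏ k, (X (i, (f k).label) * (f k).weight) := fun f => weight_node_ofFn i f
    simp only [hwE]
    set pack : (Fin d → LTree n) → (Fin d →₀ (Fin n →₀ ℕ)) :=
      fun f => Finsupp.equivFunOnFinite.symm (fun k => leafDeg (f k)) with hpack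
    have hpack_apply : ∀ f k, pack f k = leafDeg (f k) := fun f k => rfl
    have hmaps : ∀ f ∈ hΦ.toFinset, pack f ∈ finsuppAntidiag (univ : Finset (Fin d)) α := by
      intro f hf
      rw [Finset.mem_finsuppAntidiag]
      refine ⟨?_, Finset.subset_univ _⟩
      rw [Set.Finite.mem_toFinset] at hf
      calc ∑ k, pack f k = ∑ k, leafDeg (f k) := Finset.sum_congr rfl fun k _ => hpack_apply f k
        _ = α := hf.2
    rw [← Finset.sum_fiberwise_of_maps_to hmaps]
    apply Finset.sum_congr rfl
    intro l hl
    have hfiber : hΦ.toFinset.filter (fun f => pack f = l)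
        = Fintype.piFinset (fun k => (hfin' (l k)).toFinset) := by
      ext f
      simp only [Finset.mem_filter, Set.Finite.mem_toFinset, Fintype.mem_piFinset,
        Set.mem_setOf_eq]
      constructor
      · rintro ⟨⟨h1, _⟩, h3⟩ k
        exact ⟨h1 k, by rw [← h3]; exact (hpack_apply f k).symm⟩
      · intro h
        have hsum : (univ : Finset (Fin d)).sum l = α := (Finset.mem_finsuppAntidiag.1 hl).1
        refine ⟨⟨fun k => (h k).1, ?_⟩, ?_⟩
        · rw [← hsum]
          exact Finset.sum_congr rfl fun k _ => (h k).2
        · ext k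
          rw [hpack_apply, (h k).2]
    rw [hfiber]
    exact (Finset.prod_univ_sum (fun k => (hfin' (l k)).toFinset)
      (fun _ T => X (i, T.label) * T.weight)).symm


end LTree

noncomputable section

/-- `R n` is the polynomial ring `ℚ[a_{i,j} : 1 ≤ i,j ≤ n]`. -/
abbrev JacR (n : ℕ) : Type := MvPolynomial (Fin n × Fin n) ℚ

/-- let `d ≥ 2` and let `g_i` be the formal power series whose coefficient at
each multidegree `α` is the (finite) sum of the weights `w(T,λ)` over all `d`-regular
labeled rooted plane trees whose root is labeled `i` and whose leaf labels realize the
multidegree `α` (i.e. `g_i = ∑_{(T,λ)} w(T,λ) ∏_{v leaf} x_{λ(v)}`).  Then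
`f_i(g_1,…,g_n) = g_i - (∑_j a_{i,j} g_j)^d = x_i` as formal power series, i.e. `g` is the
formal inverse of the degree `d`-linear map `f`. -/
theorem stmt0 (n d : ℕ) (hn : 1 ≤ n) (hd : 2 ≤ d)
    (g : Fin n → MvPowerSeries (Fin n) (JacR n))
    (hg : ∀ (i : Fin n) (α : Fin n →₀ ℕ),
      MvPowerSeries.coeff (R := JacR n) α (g i) =
        ∑ᶠ T ∈ {T : LTree n | T.IsReg d ∧ T.label = i ∧ T.leafDeg = α}, T.weight) :
    ∀ i : Fin n,
      g i - (∑ j : Fin n, MvPowerSeries.C (σ := Fin n) (R := JacR n) (X (i, j)) * g j) ^ d =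
        MvPowerSeries.X i := by
  
  classical
  intro i
  ext α
  rw [map_sub, MvPowerSeries.coeff_X]
  have hprod : (∑ j : Fin n, MvPowerSeries.C (σ := Fin n) (R := JacR n) (X (i, j)) * g j) ^ d
      = ∏ _k : Fin d, (∑ j : Fin n, MvPowerSeries.C (σ := Fin n) (R := JacR n) (X (i, j)) * g j) := by
    rw [Finset.prod_const, Finset.card_univ, Fintype.card_fin]
  rw [hprod, MvPowerSeries.coeff_prod]
  have hcoeffh : ∀ β : Fin n →₀ ℕ, MvPowerSeries.coeff (R := JacR n) β
      (∑ j : Fin n, MvPowerSeries.C (σ := Fin n) (R := JacR n) (X (i, j)) * g j)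
      = ∑ j : Fin n, X (i, j) * MvPowerSeries.coeff (R := JacR n) β (g j) := by
    intro β
    rw [map_sum]
    exact Finset.sum_congr rfl fun j _ => MvPowerSeries.coeff_C_mul _ _ _
  simp only [hcoeffh, hg]
  rw [LTree.key d hd i α]
  rw [add_sub_cancel_right]
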